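/- Let h : 2^N → ℝ≥0 be monotone submodular with h(∅) = 0, with multilinear extension H. Suppose G is a random subset of N with |G| ≤ 1 almost surely and P[e ∈ G] ≥ y_e/8 for every e ∈ N, where y ∈ [0,1]^N. Then E[h(G)] ≥ Σ_{e ∈ N} (y_e/8)·h({e}) ≥ H(y/8) ≥ H(y)/8. -/

import Mathlib

open Finset

/-- The multilinear extension of a set function `h` on a finite ground set. -/
noncomputable def mlExt {N : Type*} [Fintype N] [DecidableEq N]
    (h : Finset N → ℝ) (x : N → ℝ) : ℝ :=
  ∑ U ∈ (Finset.univ : Finset N).powerset,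
    (∏ e ∈ U, x e) * (∏ e ∈ Finset.univ \ U, (1 - x e)) * h U

section Aux

variable {N : Type*} [DecidableEq N]

/-- Multilinear extension on a general ground set `A`. -/
noncomputable def mlA (h : Finset N → ℝ) (x : N → ℝ) (A : Finset N) : ℝ :=
  ∑ U ∈ A.powerset, (∏ e ∈ U, x e) * (∏ e ∈ A \ U, (1 - x e)) * h U

lemma mlA_empty (h : Finset N → ℝ) (x : N → ℝ) : mlA h x ∅ = h ∅ := by
  simp [mlA]

lemma mlA_insert (h : Finset N → ℝ) (x : N → ℝ) {a : N} {A : Finset N} (ha : a ∉ A) :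
    mlA h x (insert a A) =
      x a * mlA (fun U => h (insert a U)) x A + (1 - x a) * mlA h x A := by
  classical
  have hdisj : Disjoint A.powerset (A.powerset.image (insert a)) := by
    rw [Finset.disjoint_left]
    intro U hU hU'
    simp only [Finset.mem_image, Finset.mem_powerset] at hU hU'
    obtain ⟨V, hV, rfl⟩ := hU'
    exact ha (hU (Finset.mem_insert_self a V))
  rw [mlA, Finset.powerset_insert, Finset.sum_union hdisj]
  have h1 : ∑ U ∈ A.powerset,
      (∏ e ∈ U, x e) * (∏ e ∈ insert a A \ U, (1 - x e)) * h U
      = (1 - x a) * mlA h x A := by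
    rw [mlA, Finset.mul_sum]
    apply Finset.sum_congr rfl
    intro U hU
    rw [Finset.mem_powerset] at hU
    have haU : a ∉ U := fun hx => ha (hU hx)
    have : insert a A \ U = insert a (A \ U) := by
      rw [Finset.insert_sdiff_of_notMem _ haU]
    rw [this, Finset.prod_insert (by simp [ha])]
    ring
  have h2 : ∑ U ∈ A.powerset.image (insert a),
      (∏ e ∈ U, x e) * (∏ e ∈ insert a A \ U, (1 - x e)) * h U
      = x a * mlA (fun U => h (insert a U)) x A := by
    rw [Finset.sum_image ?inj]
    case inj =>
      intro U hU V hV hUV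
      rw [Finset.mem_coe, Finset.mem_powerset] at hU hV
      have haU : a ∉ U := fun hx => ha (hU hx)
      have haV : a ∉ V := fun hx => ha (hV hx)
      have := congrArg (fun S => Finset.erase S a) hUV
      simpa [Finset.erase_insert haU, Finset.erase_insert haV] using this
    rw [mlA, Finset.mul_sum]
    apply Finset.sum_congr rfl
    intro U hU
    rw [Finset.mem_powerset] at hU
    have haU : a ∉ U := fun hx => ha (hU hx)
    have hsd : insert a A \ insert a U = A \ U := by
      ext e
      simp only [Finset.mem_sdiff, Finset.mem_insert]
      constructor
      · rintro ⟨(rfl | he), hne⟩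
        · exact absurd (Or.inl rfl) hne
        · exact ⟨he, fun hu => hne (Or.inr hu)⟩
      · rintro ⟨he, hne⟩
        exact ⟨Or.inr he, fun hu => hu.elim (fun h' => ha (h' ▸ he)) hne⟩
    rw [Finset.prod_insert haU, hsd]
    ring
  rw [h1, h2]
  ring

lemma mlA_mono_fun {h g : Finset N → ℝ} (x : N → ℝ)
    (hx : ∀ e, 0 ≤ x e ∧ x e ≤ 1) {A : Finset N}
    (hfg : ∀ U ∈ A.powerset, h U ≤ g U) : mlA h x A ≤ mlA g x A := by
  apply Finset.sum_le_sum
  intro U hU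
  have hw : 0 ≤ (∏ e ∈ U, x e) * (∏ e ∈ A \ U, (1 - x e)) := by
    apply mul_nonneg
    · exact Finset.prod_nonneg fun e _ => (hx e).1
    · exact Finset.prod_nonneg fun e _ => by linarith [(hx e).2]
  exact mul_le_mul_of_nonneg_left (hfg U hU) hw

lemma mlA_add_const (h : Finset N → ℝ) (c : ℝ) (x : N → ℝ) :
    ∀ A : Finset N, mlA (fun U => h U + c) x A = mlA h x A + c := by
  intro A
  induction A using Finset.induction_on generalizing h with
  | empty => simp [mlA_empty]
  | @insert a A ha ih =>
      rw [mlA_insert _ _ ha, mlA_insert _ _ ha]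
      rw [ih (fun U => h (insert a U)), ih h]
      ring

/-- Subadditive upper bound on the multilinear extension. -/
lemma mlA_le_sum (x : N → ℝ) (hx : ∀ e, 0 ≤ x e ∧ x e ≤ 1) :
    ∀ (A : Finset N) (h : Finset N → ℝ),
      (∀ U V : Finset N, h U + h V ≥ h (U ∪ V) + h (U ∩ V)) →
      mlA h x A ≤ h ∅ + ∑ e ∈ A, x e * (h {e} - h ∅) := by
  intro A
  induction A using Finset.induction_on with
  | empty => intro h _; simp [mlA_empty]
  | @insert a A ha ih =>
      intro h hsub
      have hsub_a : ∀ U V : Finset N,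
          h (insert a U) + h (insert a V) ≥ h (insert a (U ∪ V)) + h (insert a (U ∩ V)) := by
        intro U V
        have hthis := hsub (insert a U) (insert a V)
        have e1 : insert a U ∪ insert a V = insert a (U ∪ V) := by
          ext z; simp only [Finset.mem_union, Finset.mem_insert]; tauto
        have e2 : insert a U ∩ insert a V = insert a (U ∩ V) := by
          ext z; simp only [Finset.mem_inter, Finset.mem_insert]; tauto
        rwa [e1, e2] at hthis
      have IH1 := ih (fun U => h (insert a U)) hsub_a
      have IH2 := ih h hsub
      rw [mlA_insert _ _ ha, Finset.sum_insert ha]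
      have hxa := hx a
      have hb1 : x a * mlA (fun U => h (insert a U)) x A ≤
          x a * (h (insert a ∅) + ∑ e ∈ A, x e * (h (insert a {e}) - h (insert a ∅))) :=
        mul_le_mul_of_nonneg_left IH1 hxa.1
      have hb2 : (1 - x a) * mlA h x A ≤
          (1 - x a) * (h ∅ + ∑ e ∈ A, x e * (h {e} - h ∅)) :=
        mul_le_mul_of_nonneg_left IH2 (by linarith [hxa.2])
      have key : ∑ e ∈ A, x e * (h (insert a {e}) - h (insert a ∅)) ≤
          ∑ e ∈ A, x e * (h {e} - h ∅) := by
        apply Finset.sum_le_sum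
        intro e he
        have hne : a ≠ e := fun h' => ha (h' ▸ he)
        have hthis := hsub {a} {e}
        have hu : ({a} : Finset N) ∪ {e} = insert a {e} := by
          ext z; simp only [Finset.mem_union, Finset.mem_insert, Finset.mem_singleton]
        have hi : ({a} : Finset N) ∩ {e} = ∅ :=
          Finset.singleton_inter_of_notMem (by simpa using hne)
        rw [hu, hi] at hthis
        have hpt : h (insert a {e}) - h (insert a ∅) ≤ h {e} - h ∅ := by
          rw [Finset.insert_empty]
          linarith
        exact mul_le_mul_of_nonneg_left hpt (hx e).1
      have hkey' := mul_le_mul_of_nonneg_left key hxa.1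
      simp only [Finset.insert_empty] at *
      nlinarith [hb1, hb2, hkey']

/-- Scaling lower bound `H(l·y) ≥ l·H(y) + (1-l)·h(∅)`. -/
lemma mlA_scale (y : N → ℝ) (hy : ∀ e, 0 ≤ y e ∧ y e ≤ 1)
    (l : ℝ) (hl0 : 0 ≤ l) (hl1 : l ≤ 1) :
    ∀ (A : Finset N) (h : Finset N → ℝ),
      (∀ U V : Finset N, h U + h V ≥ h (U ∪ V) + h (U ∩ V)) →
      mlA h (fun e => l * y e) A ≥ l * mlA h y A + (1 - l) * h ∅ := by
  intro A
  induction A using Finset.induction_on with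
  | empty =>
      intro h _
      simp only [mlA_empty]
      have : l * h ∅ + (1 - l) * h ∅ = h ∅ := by ring
      linarith
  | @insert a A ha ih =>
      intro h hsub
      have hsub_a : ∀ U V : Finset N,
          h (insert a U) + h (insert a V) ≥ h (insert a (U ∪ V)) + h (insert a (U ∩ V)) := by
        intro U V
        have hthis := hsub (insert a U) (insert a V)
        have e1 : insert a U ∪ insert a V = insert a (U ∪ V) := by
          ext z; simp only [Finset.mem_union, Finset.mem_insert]; tauto
        have e2 : insert a U ∩ insert a V = insert a (U ∩ V) := by
          ext z; simp only [Finset.mem_inter, Finset.mem_insert]; tauto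
        rwa [e1, e2] at hthis
      have IH1 := ih (fun U => h (insert a U)) hsub_a
      have IH2 := ih h hsub
      rw [mlA_insert _ _ ha, mlA_insert h y ha]
      have hya := hy a
      set Ma := mlA (fun U => h (insert a U)) y A with hMa
      set M := mlA h y A with hM
      -- key: Ma ≤ M + (h {a} - h ∅)
      have hub : Ma ≤ M + (h {a} - h ∅) := by
        have hpt : ∀ U ∈ A.powerset, h (insert a U) ≤ h U + (h {a} - h ∅) := by
          intro U hU
          rw [Finset.mem_powerset] at hU
          have haU : a ∉ U := fun hx => ha (hU hx)
          have hthis := hsub U {a}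
          have hu : U ∪ {a} = insert a U := by
            ext z; simp only [Finset.mem_union, Finset.mem_insert, Finset.mem_singleton]; tauto
          rw [hu, Finset.inter_singleton_of_notMem haU] at hthis
          linarith
        have := mlA_mono_fun y hy (A := A) hpt
        rwa [mlA_add_const h (h {a} - h ∅) y A] at this
      have hb1 : (l * y a) * mlA (fun U => h (insert a U)) (fun e => l * y e) A ≥
          (l * y a) * (l * Ma + (1 - l) * h (insert a ∅)) :=
        mul_le_mul_of_nonneg_left IH1 (mul_nonneg hl0 hya.1)
      have hb2 : (1 - l * y a) * mlA h (fun e => l * y e) A ≥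
          (1 - l * y a) * (l * M + (1 - l) * h ∅) := by
        apply mul_le_mul_of_nonneg_left IH2
        nlinarith [hya.2]
      simp only [Finset.insert_empty] at *
      nlinarith [hb1, hb2, mul_nonneg (mul_nonneg hl0 hya.1) (sub_nonneg.mpr hl1)]

end Aux

lemma mlExt_eq_mlA {N : Type*} [Fintype N] [DecidableEq N]
    (h : Finset N → ℝ) (x : N → ℝ) : mlExt h x = mlA h x Finset.univ := rfl

theorem stmt16 {N : Type*} [Fintype N] [DecidableEq N]
    {Ω : Type*} [Fintype Ω]
    (h : Finset N → ℝ) (hnonneg : ∀ U, 0 ≤ h U) (h0 : h ∅ = 0)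
    (hmono : ∀ U V : Finset N, U ⊆ V → h U ≤ h V)
    (hsub : ∀ U V : Finset N, h U + h V ≥ h (U ∪ V) + h (U ∩ V))
    (p : Ω → ℝ) (hp : ∀ ω, 0 ≤ p ω) (hp1 : ∑ ω, p ω = 1)
    (G : Ω → Finset N) (hcard : ∀ ω, (G ω).card ≤ 1)
    (y : N → ℝ) (hy : ∀ e, 0 ≤ y e ∧ y e ≤ 1)
    (hmarg : ∀ e, y e / 8 ≤ ∑ ω ∈ Finset.univ.filter (fun ω => e ∈ G ω), p ω) :
    (∑ ω, p ω * h (G ω)) ≥ ∑ e, (y e / 8) * h {e} ∧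
    (∑ e, (y e / 8) * h {e}) ≥ mlExt h (fun e => y e / 8) ∧
    mlExt h (fun e => y e / 8) ≥ mlExt h y / 8 := by
  classical
  have hx8 : ∀ e, 0 ≤ y e / 8 ∧ y e / 8 ≤ 1 := by
    intro e; have := hy e; constructor <;> [linarith; linarith]
  refine ⟨?part1, ?part2, ?part3⟩
  case part1 =>
    have hGe : ∀ ω, h (G ω) = ∑ e ∈ G ω, h {e} := by
      intro ω
      rcases Nat.le_one_iff_eq_zero_or_eq_one.mp (hcard ω) with h1 | h1
      · rw [Finset.card_eq_zero] at h1; simp [h1, h0]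
      · obtain ⟨e, he⟩ := Finset.card_eq_one.mp h1
        simp [he]
    calc ∑ ω, p ω * h (G ω) = ∑ ω, ∑ e ∈ G ω, p ω * h {e} := by
          apply Finset.sum_congr rfl
          intro ω _
          rw [hGe ω, Finset.mul_sum]
      _ = ∑ ω, ∑ e : N, if e ∈ G ω then p ω * h {e} else 0 := by
          apply Finset.sum_congr rfl
          intro ω _
          rw [Finset.sum_ite_mem, Finset.univ_inter]
      _ = ∑ e : N, ∑ ω, if e ∈ G ω then p ω * h {e} else 0 := Finset.sum_comm
      _ = ∑ e : N, (∑ ω ∈ Finset.univ.filter (fun ω => e ∈ G ω), p ω) * h {e} := by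
          apply Finset.sum_congr rfl
          intro e _
          rw [Finset.sum_mul, Finset.sum_filter]
      _ ≥ ∑ e, (y e / 8) * h {e} := by
          apply Finset.sum_le_sum
          intro e _
          exact mul_le_mul_of_nonneg_right (hmarg e) (hnonneg _)
  case part2 =>
    have := mlA_le_sum (fun e => y e / 8) hx8 Finset.univ h hsub
    rw [← mlExt_eq_mlA] at this
    calc mlExt h (fun e => y e / 8)
        ≤ h ∅ + ∑ e, (y e / 8) * (h {e} - h ∅) := this
      _ = ∑ e, (y e / 8) * h {e} := by rw [h0]; simp
  case part3 =>
    have hsc := mlA_scale y hy (1/8) (by norm_num) (by norm_num) Finset.univ h hsub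
    rw [← mlExt_eq_mlA] at hsc
    have hfun : (fun e => y e / 8) = (fun e => (1/8 : ℝ) * y e) := by
      funext e; ring
    rw [hfun, ← mlExt_eq_mlA] at *
    rw [h0] at hsc
    calc mlExt h (fun e => (1/8 : ℝ) * y e)
        ≥ 1/8 * mlExt h y + (1 - 1/8) * 0 := hsc
      _ = mlExt h y / 8 := by ring
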